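/- Let λ₁, λ₂ be integers and let α ∈ [0,1]. Suppose that for every ε₁ > 0 there exists a measurable set A ⊆ 𝕋 with μ(A) ≥ α − ε₁ such that λ₁·A ∩ λ₂·A = ∅. Then for every ε₂ > 0 there exist δ > 0 and p₀ such that for every prime p ≥ p₀ and every natural number t ≤ δ·p, there exists a set A′ ⊆ ℤ/pℤ with |A′| ≥ (α − ε₂)·p such that no element of {−t, −t+1, …, t} (reduced mod p) lies in λ₁·A′ − λ₂·A′. -/

import Mathlib

open Pointwise MeasureTheory Metric Set

private lemma norm_unitAddCircle_coe_le (x : ℝ) : ‖((x : ℝ) : UnitAddCircle)‖ ≤ |x| := by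
  rw [AddCircle.norm_eq]
  simpa using round_le x 0

theorem transfer_circle_to_ZMod (l₁ l₂ : ℤ) (α : ℝ) (hα₀ : 0 ≤ α) (hα₁ : α ≤ 1)
    (h : ∀ ε₁ : ℝ, 0 < ε₁ → ∃ A : Set UnitAddCircle, MeasurableSet A ∧
        ENNReal.ofReal (α - ε₁) ≤ volume A ∧
        ((fun x => l₁ • x) '' A) ∩ ((fun x => l₂ • x) '' A) = ∅) :
    ∀ ε₂ : ℝ, 0 < ε₂ → ∃ δ : ℝ, 0 < δ ∧ ∃ p₀ : ℕ,
      ∀ p : ℕ, p.Prime → p₀ ≤ p → ∀ t : ℕ, (t : ℝ) ≤ δ * p →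
        ∃ A' : Finset (ZMod p), (α - ε₂) * p ≤ (A'.card : ℝ) ∧
          ∀ r : ℤ, |r| ≤ (t : ℤ) →
            (r : ZMod p) ∉ (A'.image fun a => l₁ • a) - (A'.image fun a => l₂ • a) := by
  classical
  intro ε₂ hε₂
  rcases le_or_gt α ε₂ with hcase | hcase
  · -- trivial case : α - ε₂ ≤ 0, take A' = ∅
    refine ⟨1, one_pos, 1, fun p hp _ t _ => ⟨∅, ?_, ?_⟩⟩
    · have : (α - ε₂) * p ≤ 0 :=
        mul_nonpos_of_nonpos_of_nonneg (by linarith) (Nat.cast_nonneg p)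
      simpa using this
    · intro r _
      simp
  · -- main case
    obtain ⟨A, hAm, hAvol, hAdisj⟩ := h (ε₂ / 2) (by linarith)
    obtain ⟨K, hKA, hK, hKvol⟩ := hAm.exists_isCompact_lt_add (μ := volume) (measure_ne_top volume A)
      (ε := ENNReal.ofReal (ε₂ / 2)) (ENNReal.ofReal_pos.mpr (by linarith)).ne'
    -- volume K ≥ α - ε₂ (real)
    have hKfin : volume K ≠ ⊤ := measure_ne_top _ _
    have hKreal : α - ε₂ ≤ (volume K).toReal := by
      have h1 : ENNReal.ofReal (α - ε₂ / 2) ≤ volume K + ENNReal.ofReal (ε₂ / 2) :=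
        le_trans hAvol hKvol.le
      have h2 : α - ε₂ / 2 ≤ (volume K + ENNReal.ofReal (ε₂ / 2)).toReal := by
        refine ENNReal.ofReal_le_iff_le_toReal ?_ |>.mp h1
        simp [hKfin, ENNReal.add_ne_top]
      rw [ENNReal.toReal_add hKfin ENNReal.ofReal_ne_top,
        ENNReal.toReal_ofReal (by linarith)] at h2
      linarith
    have hKpos : 0 < (volume K).toReal := lt_of_lt_of_le (by linarith) hKreal
    have hKne : K.Nonempty := by
      rcases K.eq_empty_or_nonempty with rfl | hne
      · simp at hKpos
      · exact hne
    -- disjoint compact images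
    have hdisj : Disjoint ((fun x => l₁ • x) '' K) ((fun x => l₂ • x) '' K) := by
      refine Set.disjoint_left.mpr fun x hx1 hx2 => ?_
      have : x ∈ ((fun x => l₁ • x) '' A) ∩ ((fun x => l₂ • x) '' A) :=
        ⟨Set.image_mono hKA hx1, Set.image_mono hKA hx2⟩
      rw [hAdisj] at this
      exact this
    have hc1 : IsCompact ((fun x => l₁ • x) '' K) := hK.image (continuous_zsmul l₁)
    have hc2 : IsCompact ((fun x => l₂ • x) '' K) := hK.image (continuous_zsmul l₂)
    obtain ⟨d, hd0, hdth⟩ := hdisj.exists_cthickenings hc1 hc2.isClosed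
    set L : ℝ := max |(l₁ : ℝ)| |(l₂ : ℝ)| + 1 with hL
    have hL1 : 1 ≤ L := by
      have : (0:ℝ) ≤ max |(l₁ : ℝ)| |(l₂ : ℝ)| := le_max_iff.mpr (Or.inl (abs_nonneg _))
      linarith
    have hl₁L : |(l₁ : ℝ)| ≤ L := by have := le_max_left |(l₁ : ℝ)| |(l₂ : ℝ)|; linarith
    have hl₂L : |(l₂ : ℝ)| ≤ L := by have := le_max_right |(l₁ : ℝ)| |(l₂ : ℝ)|; linarith
    refine ⟨d / 2, by linarith, ⌈L / d⌉₊ + 1, fun p hp hpp₀ t ht => ?_⟩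
    haveI : NeZero p := ⟨hp.pos.ne'⟩
    have hp0 : (0 : ℝ) < p := Nat.cast_pos.mpr hp.pos
    have hp1 : (1 : ℝ) ≤ p := Nat.one_le_cast.mpr hp.one_lt.le
    have hpL : L / d ≤ p := by
      refine le_trans (Nat.le_ceil _) ?_
      exact_mod_cast Nat.le_of_succ_le hpp₀
    have hLp : L / (2 * p) ≤ d / 2 := by
      have hLdp : L ≤ p * d := (div_le_iff₀ hd0).mp hpL
      rw [div_le_div_iff₀ (by positivity) (by norm_num)]
      nlinarith
    set π : ZMod p →+ UnitAddCircle := ZMod.toAddCircle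
    set A' : Finset (ZMod p) :=
      Finset.univ.filter (fun a => π a ∈ cthickening (1 / (2 * p)) K) with hA'
    have hball : ∀ a : ZMod p,
        volume (closedBall (π a) (1 / (2 * p))) = ENNReal.ofReal (1 / p) := by
      intro a
      rw [AddCircle.volume_closedBall (T := 1)]
      congr 1
      rw [show (2 : ℝ) * (1 / (2 * (p : ℝ))) = 1 / p by ring]
      exact min_eq_right (div_le_one_of_le₀ hp1 hp0.le)
    -- covering
    have hcover : K ⊆ ⋃ a ∈ A', closedBall (π a) (1 / (2 * p)) := by
      intro x hx
      obtain ⟨y, rfl⟩ := QuotientAddGroup.mk_surjective x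
      set n : ℤ := round ((p : ℝ) * y) with hn
      have hdist : dist (π ((n : ℤ) : ZMod p)) ((y : ℝ) : UnitAddCircle) ≤ 1 / (2 * p) := by
        rw [ZMod.toAddCircle_intCast, dist_eq_norm, ← AddCircle.coe_sub]
        refine le_trans (norm_unitAddCircle_coe_le _) ?_
        have : |(n : ℝ) / p - y| = |(p : ℝ) * y - n| / p := by
          rw [show (n : ℝ) / p - y = -(((p : ℝ) * y - n) / p) by field_simp; ring,
            abs_neg, abs_div, abs_of_pos hp0]
        rw [this]
        have := abs_sub_round ((p : ℝ) * y)
        rw [div_le_div_iff₀ hp0 (by positivity)]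
        nlinarith
      have hmem : ((n : ℤ) : ZMod p) ∈ A' := by
        rw [hA', Finset.mem_filter]
        exact ⟨Finset.mem_univ _,
          mem_cthickening_of_dist_le _ _ _ _ hx hdist⟩
      exact Set.mem_biUnion hmem (by rwa [mem_closedBall, dist_comm])
    -- cardinality bound
    have hcard : (α - ε₂) * p ≤ (A'.card : ℝ) := by
      have h1 : volume K ≤ (A'.card : ENNReal) * ENNReal.ofReal (1 / p) := by
        calc volume K ≤ volume (⋃ a ∈ A', closedBall (π a) (1 / (2 * p))) :=
              measure_mono hcover
          _ ≤ ∑ a ∈ A', volume (closedBall (π a) (1 / (2 * p))) :=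
              measure_biUnion_finset_le _ _
          _ = (A'.card : ENNReal) * ENNReal.ofReal (1 / p) := by
              rw [Finset.sum_congr rfl (fun a _ => hball a), Finset.sum_const, nsmul_eq_mul]
      have h2 : ENNReal.ofReal (α - ε₂) ≤ ENNReal.ofReal ((A'.card : ℝ) * (1 / p)) := by
        calc ENNReal.ofReal (α - ε₂) ≤ volume K := by
              rw [← ENNReal.ofReal_toReal hKfin]
              exact ENNReal.ofReal_le_ofReal hKreal
          _ ≤ (A'.card : ENNReal) * ENNReal.ofReal (1 / p) := h1
          _ = ENNReal.ofReal ((A'.card : ℝ) * (1 / p)) := by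
              rw [ENNReal.ofReal_mul (Nat.cast_nonneg _), ENNReal.ofReal_natCast]
      have h3 : α - ε₂ ≤ (A'.card : ℝ) * (1 / p) :=
        (ENNReal.ofReal_le_ofReal_iff (by positivity)).mp h2
      calc (α - ε₂) * p ≤ ((A'.card : ℝ) * (1 / p)) * p := by
            exact mul_le_mul_of_nonneg_right h3 hp0.le
        _ = A'.card := by field_simp
    refine ⟨A', hcard, fun r hr hmem => ?_⟩
    -- extract witnesses
    rw [Finset.mem_sub] at hmem
    obtain ⟨u, hu, v, hv, huv⟩ := hmem
    rw [Finset.mem_image] at hu hv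
    obtain ⟨a, ha, rfl⟩ := hu
    obtain ⟨b, hb, rfl⟩ := hv
    rw [hA', Finset.mem_filter] at ha hb
    -- points of K near π a and π b
    have hth : ∀ c : ZMod p, π c ∈ cthickening (1 / (2 * p)) K →
        ∃ x ∈ K, dist (π c) x ≤ 1 / (2 * p) := by
      intro c hc
      rw [hK.cthickening_eq_biUnion_closedBall (by positivity)] at hc
      obtain ⟨x, hxK, hx⟩ := Set.mem_iUnion₂.mp hc
      exact ⟨x, hxK, hx⟩
    obtain ⟨x, hxK, hxd⟩ := hth a ha.2
    obtain ⟨y, hyK, hyd⟩ := hth b hb.2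
    -- small circle distance between l₁ • π a and l₂ • π b
    have hsub : l₁ • π a - l₂ • π b = (((r : ℝ) / (p : ℝ)) : UnitAddCircle) := by
      rw [← map_zsmul, ← map_zsmul, ← map_sub, huv, ZMod.toAddCircle_intCast]
    have hsmall : dist (l₁ • π a) (l₂ • π b) ≤ d / 2 := by
      rw [dist_eq_norm, hsub]
      refine le_trans (norm_unitAddCircle_coe_le _) ?_
      rw [abs_div, abs_of_pos hp0]
      have hrt : |(r : ℝ)| ≤ (t : ℝ) := by exact_mod_cast hr
      rw [div_le_iff₀ hp0]
      nlinarith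
    -- Lipschitz bounds
    have hzsmul : ∀ (l : ℤ) (u v : UnitAddCircle), dist (l • u) (l • v) ≤ |(l : ℝ)| * dist u v := by
      intro l u v
      rw [dist_eq_norm, dist_eq_norm, ← smul_sub]
      simpa [Int.norm_eq_abs] using norm_zsmul_le l (u - v)
    have h1 : l₁ • π a ∈ cthickening d ((fun x => l₁ • x) '' K) := by
      refine mem_cthickening_of_dist_le _ (l₁ • x) _ _ ⟨x, hxK, rfl⟩ ?_
      calc dist (l₁ • π a) (l₁ • x) ≤ |(l₁ : ℝ)| * dist (π a) x := hzsmul _ _ _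
        _ ≤ L * (1 / (2 * p)) := by
            apply mul_le_mul hl₁L hxd dist_nonneg (by linarith)
        _ ≤ d / 2 := by rw [mul_one_div]; exact hLp
        _ ≤ d := by linarith
    have h2 : l₁ • π a ∈ cthickening d ((fun x => l₂ • x) '' K) := by
      refine mem_cthickening_of_dist_le _ (l₂ • y) _ _ ⟨y, hyK, rfl⟩ ?_
      calc dist (l₁ • π a) (l₂ • y) ≤ dist (l₁ • π a) (l₂ • π b) + dist (l₂ • π b) (l₂ • y) :=
            dist_triangle _ _ _
        _ ≤ d / 2 + |(l₂ : ℝ)| * dist (π b) y := by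
            exact add_le_add hsmall (hzsmul _ _ _)
        _ ≤ d / 2 + L * (1 / (2 * p)) := by
            have := mul_le_mul hl₂L hyd dist_nonneg (le_trans (by norm_num) hL1)
            linarith
        _ ≤ d / 2 + d / 2 := by rw [mul_one_div]; linarith [hLp]
        _ = d := by ring
    exact Set.disjoint_left.mp hdth h1 h2
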